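/- Let k be a field of characteristic zero and V a finite-dimensional k-vector space. Suppose h, e, f ∈ End(V) satisfy the sl₂-relations h∘e − e∘h = 2e, h∘f − f∘h = −2f, and e∘f − f∘e = h. If P ∈ End(V) satisfies P∘P = P, e∘P = 0, P∘f = 0, and P v = v for every v ∈ ker(e), then P equals the projection of V onto ker(e) along range(f); in particular such an operator P is unique. -/

import Mathlib

open Module LinearMap

namespace Sl2ProofAux

variable {K V : Type*} [Field K] [AddCommGroup V] [Module K V]

/-- If `X * C = C * Y` then `C` maps the generalized eigenspaces of `Y` into those of `X`. -/
lemma mapsTo_maxGen {X Y C : Module.End K V} (hc : X * C = C * Y) (μ : K) :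
    ∀ x ∈ Y.maxGenEigenspace μ, C x ∈ X.maxGenEigenspace μ := by
  intro x hx
  rw [Module.End.mem_maxGenEigenspace] at hx ⊢
  obtain ⟨n, hn⟩ := hx
  refine ⟨n, ?_⟩
  have key : (X - μ • 1) * C = C * (Y - μ • 1) := by
    rw [sub_mul, mul_sub, hc, smul_mul_assoc, mul_smul_comm, one_mul, mul_one]
  have key2 : ∀ m : ℕ, (X - μ • 1) ^ m * C = C * (Y - μ • 1) ^ m := by
    intro m
    induction m with
    | zero => simp
    | succ m ih => rw [pow_succ, pow_succ, mul_assoc, key, ← mul_assoc, ih, mul_assoc]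
  have := congrArg (fun (T : Module.End K V) => T x) (key2 n)
  simpa [Module.End.mul_apply, hn] using this

lemma maxGen_shift (T : Module.End K V) (c μ : K) :
    (T - c • 1).maxGenEigenspace μ = T.maxGenEigenspace (μ + c) := by
  have : T - c • 1 - μ • 1 = T - (μ + c) • 1 := by
    rw [add_smul, sub_sub, add_comm (μ • 1)]
  ext x
  rw [Module.End.mem_maxGenEigenspace, Module.End.mem_maxGenEigenspace, this]

lemma eq_zero_of_mem_maxGen_of_apply_eq_zero (T : Module.End K V) {lam : K} (hl : lam ≠ 0)
    {x : V} (hx : x ∈ T.maxGenEigenspace lam) (hTx : T x = 0) : x = 0 := by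
  obtain ⟨n, hn⟩ := (Module.End.mem_maxGenEigenspace _ _ _).mp hx
  have key : ∀ m : ℕ, ((T - lam • 1) ^ m) x = ((-lam) ^ m) • x := by
    intro m
    induction m with
    | zero => simp
    | succ m ih =>
      have h1 : (T - lam • 1) x = (-lam) • x := by
        simp [LinearMap.sub_apply, hTx, neg_smul]
      rw [pow_succ, Module.End.mul_apply, h1, map_smul, ih, smul_smul, ← pow_succ']
  rw [key n] at hn
  have := smul_eq_zero.mp hn
  rcases this with h | h
  · exact absurd h (pow_ne_zero _ (neg_ne_zero.mpr hl))
  · exact h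


/-- If `B` and `H'` commute, `x` is a generalized `lam`-eigenvector for `B` and a generalized
`μ`-eigenvector for `H'`, then `x` is a generalized `(lam - μ)`-eigenvector for `B - H'`. -/
lemma mem_maxGen_sub {B H' : Module.End K V} (hcomm : B * H' = H' * B) {lam μ : K} {x : V}
    (hxB : x ∈ B.maxGenEigenspace lam) (hxH : x ∈ H'.maxGenEigenspace μ) :
    x ∈ (B - H').maxGenEigenspace (lam - μ) := by
  obtain ⟨p, hp⟩ := (Module.End.mem_maxGenEigenspace _ _ _).mp hxB
  obtain ⟨q, hq⟩ := (Module.End.mem_maxGenEigenspace _ _ _).mp hxH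
  rw [Module.End.mem_maxGenEigenspace]
  refine ⟨p + q, ?_⟩
  set X := B - lam • 1 with hX
  set Y := H' - μ • 1 with hY
  have hXY : Commute X Y := by
    have h1 : Commute B H' := hcomm
    have h2 : Commute B ((1 : Module.End K V)) := Commute.one_right B
    have h3 : Commute ((1 : Module.End K V)) H' := Commute.one_left H'
    exact (h1.sub_right (Commute.smul_right h2 μ)).sub_left
      (Commute.smul_left (h3.sub_right (Commute.smul_right (Commute.one_right 1) μ)) lam)
  have hXn : ∀ j : ℕ, p ≤ j → (X ^ j) x = 0 := by
    intro j hj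
    obtain ⟨i, rfl⟩ := Nat.exists_eq_add_of_le hj
    rw [add_comm, pow_add, Module.End.mul_apply, hp, map_zero]
  have hYn : ∀ j : ℕ, q ≤ j → (Y ^ j) x = 0 := by
    intro j hj
    obtain ⟨i, rfl⟩ := Nat.exists_eq_add_of_le hj
    rw [add_comm, pow_add, Module.End.mul_apply, hq, map_zero]
  have hkey : B - H' - (lam - μ) • 1 = X - Y := by
    rw [hX, hY, sub_smul]
    abel
  rw [hkey, sub_eq_add_neg]
  rw [(hXY.neg_right).add_pow (p + q)]
  rw [LinearMap.sum_apply]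
  refine Finset.sum_eq_zero fun i hi => ?_
  rw [Finset.mem_range] at hi
  rcases le_or_gt p i with hpi | hpi
  · have hcomm1 : Commute (X ^ i) ((-Y) ^ (p + q - i) * ((p + q).choose i : Module.End K V)) :=
      Commute.mul_right ((hXY.neg_right).pow_pow i (p + q - i))
        (Nat.cast_commute _ _).symm
    rw [mul_assoc, hcomm1.eq, Module.End.mul_apply, hXn i hpi, map_zero]
  · have hqle : q ≤ p + q - i := by omega
    rw [mul_assoc, Module.End.mul_apply, Module.End.mul_apply]
    have hc : ((p + q).choose i : Module.End K V) x = ((p + q).choose i : ℕ) • x := by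
      simp
    have hy0 : ((-Y) ^ (p + q - i)) x = 0 := by
      rw [neg_pow, Module.End.mul_apply, hYn _ hqle, map_zero]
    rw [hc, map_nsmul, hy0, smul_zero, map_zero]


section Sl2

variable {H E F : Module.End K V}

lemma E_maps_W (rhe : H * E - E * H = E + E) (μ : K) :
    ∀ x ∈ H.maxGenEigenspace μ, E x ∈ H.maxGenEigenspace (μ + 2) := by
  have hc : (H - (2 : K) • 1) * E = E * H := by
    rw [sub_mul, smul_mul_assoc, one_mul, two_smul K E, eq_add_of_sub_eq rhe]
    abel
  intro x hx
  have := mapsTo_maxGen hc μ x hx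
  rwa [maxGen_shift] at this

lemma F_maps_W (rhf : H * F - F * H = -(F + F)) (μ : K) :
    ∀ x ∈ H.maxGenEigenspace μ, F x ∈ H.maxGenEigenspace (μ - 2) := by
  have hc2 : (H - (-2 : K) • 1) * F = F * H := by
    rw [sub_mul, smul_mul_assoc, one_mul, eq_add_of_sub_eq rhf, neg_smul, two_smul K F]
    abel
  intro x hx
  have := mapsTo_maxGen hc2 μ x hx
  rw [maxGen_shift] at this
  rwa [show μ + (-2 : K) = μ - 2 by ring] at this

lemma commHB (rhe : H * E - E * H = E + E) (rhf : H * F - F * H = -(F + F)) :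
    E * F * H = H * (E * F) := by
  have h1 : H * E = (E + E) + E * H := eq_add_of_sub_eq rhe
  have h2 : H * F = -(F + F) + F * H := eq_add_of_sub_eq rhf
  have : H * (E * F) = E * F * H := by
    calc H * (E * F) = (H * E) * F := by rw [mul_assoc]
      _ = ((E + E) + E * H) * F := by rw [h1]
      _ = (E * F + E * F) + E * (H * F) := by rw [add_mul, add_mul, mul_assoc]
      _ = (E * F + E * F) + E * (-(F + F) + F * H) := by rw [h2]
      _ = (E * F + E * F) + (-(E * F + E * F) + E * F * H) := by
          rw [mul_add, mul_neg, mul_add, mul_assoc]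
      _ = E * F * H := by abel
  exact this.symm

lemma chain_step (rhe : H * E - E * H = E + E) (rhf : H * F - F * H = -(F + F))
    (ref : E * F - F * E = H) {μ lam : K} {x : V}
    (hW : x ∈ H.maxGenEigenspace μ) (hG : x ∈ (F * E).maxGenEigenspace lam) :
    E x ∈ H.maxGenEigenspace (μ + 2) ∧
      E x ∈ (F * E).maxGenEigenspace (lam - (μ + 2)) := by
  have h1 : E x ∈ H.maxGenEigenspace (μ + 2) := E_maps_W rhe μ x hW
  have h2 : E x ∈ (E * F).maxGenEigenspace lam := by
    have : (E * F) * E = E * (F * E) := by rw [mul_assoc]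
    exact mapsTo_maxGen this lam x hG
  have h3 := mem_maxGen_sub (commHB rhe rhf) h2 h1
  rw [show E * F - H = F * E from by rw [← ref]; abel] at h3
  exact ⟨h1, h3⟩

variable [CharZero K] [FiniteDimensional K V]

/-- Key lemma: a generalized `0`-eigenvector of `F * E` of nonnegative-integer
generalized `H`-weight is killed by `E`. -/
lemma ex_zero (rhe : H * E - E * H = E + E) (rhf : H * F - F * H = -(F + F))
    (ref : E * F - F * E = H) {m : ℕ} {x : V}
    (hW : x ∈ H.maxGenEigenspace (m : K)) (hG : x ∈ (F * E).maxGenEigenspace 0) :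
    E x = 0 := by
  by_contra hEx
  have key : ∀ j : ℕ, (E ^ j) x ∈ H.maxGenEigenspace ((m : K) + 2 * j) ∧
      (E ^ j) x ∈ (F * E).maxGenEigenspace (-(j : K) * ((m : K) + (j : K) + 1)) := by
    intro j
    induction j with
    | zero =>
      constructor
      · simpa using hW
      · simpa using hG
    | succ j ih =>
      have hstep := chain_step rhe rhf ref ih.1 ih.2
      have hx1 : (E ^ (j + 1)) x = E ((E ^ j) x) := by
        rw [pow_succ' E j]; rfl
      rw [hx1]
      constructor
      · convert hstep.1 using 2
        push_cast; ring
      · convert hstep.2 using 2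
        push_cast; ring
  have nz : ∀ j : ℕ, (E ^ (j + 1)) x ≠ 0 := by
    intro j
    induction j with
    | zero => simpa using hEx
    | succ j ih =>
      intro h0
      have hGa := (key (j + 1)).2
      have hA : (F * E) ((E ^ (j + 1)) x) = 0 := by
        have hx2 : (E ^ (j + 2)) x = E ((E ^ (j + 1)) x) := by
          rw [pow_succ' E (j + 1)]; rfl
        rw [Module.End.mul_apply, ← hx2, show j + 2 = j + 1 + 1 from rfl, h0, map_zero]
      have hlam : -((j + 1 : ℕ) : K) * ((m : K) + ((j + 1 : ℕ) : K) + 1) ≠ 0 := by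
        have hne1 : ((j : K) + 1) ≠ 0 := Nat.cast_add_one_ne_zero j
        have hne2 : ((m : K) + ((j : K) + 1) + 1) ≠ 0 := by
          have hm2 : ((m + j + 2 : ℕ) : K) ≠ 0 := Nat.cast_ne_zero.mpr (by omega)
          push_cast at hm2
          intro hcon; apply hm2; linear_combination hcon
        push_cast
        exact mul_ne_zero (neg_ne_zero.mpr hne1) hne2
      exact ih (eq_zero_of_mem_maxGen_of_apply_eq_zero _ hlam hGa hA)
  -- infinitely many nonzero generalized weight spaces: contradiction
  let p : ℕ → Submodule K V := fun j => H.maxGenEigenspace ((m : K) + 2 * ((j : K) + 1))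
  have hinj : Function.Injective (fun j : ℕ => (m : K) + 2 * ((j : K) + 1)) := by
    intro a b hab
    simp only at hab
    have h2 : (2 : K) ≠ 0 := two_ne_zero
    have := add_right_cancel (mul_left_cancel₀ h2 (add_left_cancel hab))
    exact_mod_cast this
  have hp : iSupIndep p := (H.independent_maxGenEigenspace).comp hinj
  haveI := hp.fintypeNeBotOfFiniteDimensional
  have hforall : ∀ j, p j ≠ ⊥ := by
    intro j
    rw [Submodule.ne_bot_iff]
    refine ⟨(E ^ (j + 1)) x, ?_, nz j⟩
    have := (key (j + 1)).1
    have hcast : ((m : K) + 2 * ((j + 1 : ℕ) : K)) = (m : K) + 2 * ((j : K) + 1) := by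
      push_cast; ring
    rwa [hcast] at this
  have : Finite ℕ := Finite.of_injective (fun j : ℕ => (⟨j, hforall j⟩ : {j // p j ≠ ⊥}))
    (fun a b hab => by simpa using congrArg Subtype.val hab)
  exact @not_finite ℕ _ this


lemma memGA_of_ker (rhe : H * E - E * H = E + E) (rhf : H * F - F * H = -(F + F))
    (ref : E * F - F * E = H) {m : ℕ} {y : V}
    (hyF : F y = 0) (hyW : y ∈ H.maxGenEigenspace (-(m : K))) :
    y ∈ (F * E).maxGenEigenspace (m : K) := by
  have hB : y ∈ (E * F).maxGenEigenspace 0 := by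
    rw [Module.End.mem_maxGenEigenspace]
    refine ⟨1, ?_⟩
    rw [pow_one]
    simp [Module.End.mul_apply, hyF]
  have h3 := mem_maxGen_sub (commHB rhe rhf) hB hyW
  rw [show E * F - H = F * E from by rw [← ref]; abel] at h3
  rwa [show (0 : K) - (-(m : K)) = (m : K) by ring] at h3

/-- The slice of `ker F` of generalized weight `-m` injects (via `E ^ m`) into the slice of
`ker E` of generalized weight `m`. -/
lemma slice_le (rhe : H * E - E * H = E + E) (rhf : H * F - F * H = -(F + F))
    (ref : E * F - F * E = H) (m : ℕ) :
    finrank K ↥(LinearMap.ker F ⊓ H.maxGenEigenspace (-(m : K))) ≤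
      finrank K ↥(LinearMap.ker E ⊓ H.maxGenEigenspace (m : K)) := by
  classical
  -- the chain facts
  have key : ∀ y : V, F y = 0 → y ∈ H.maxGenEigenspace (-(m : K)) → ∀ j : ℕ,
      (E ^ j) y ∈ H.maxGenEigenspace (-(m : K) + 2 * j) ∧
      (E ^ j) y ∈ (F * E).maxGenEigenspace (((j : K) + 1) * ((m : K) - (j : K))) := by
    intro y hyF hyW j
    induction j with
    | zero =>
      constructor
      · simpa using hyW
      · have := memGA_of_ker rhe rhf ref hyF hyW
        convert this using 2
        push_cast; ring
        simp
    | succ j ih =>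
      have hstep := chain_step rhe rhf ref ih.1 ih.2
      have hx1 : (E ^ (j + 1)) y = E ((E ^ j) y) := by
        rw [pow_succ' E j]; rfl
      rw [hx1]
      constructor
      · convert hstep.1 using 2
        push_cast; ring
      · convert hstep.2 using 2
        push_cast; ring
  -- nonvanishing up to m
  have nz : ∀ y : V, F y = 0 → y ∈ H.maxGenEigenspace (-(m : K)) → y ≠ 0 →
      ∀ j : ℕ, j ≤ m → (E ^ j) y ≠ 0 := by
    intro y hyF hyW hy0 j
    induction j with
    | zero => intro _; simpa using hy0
    | succ j ih =>
      intro hjm h0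
      have hGa := (key y hyF hyW j).2
      have hA : (F * E) ((E ^ j) y) = 0 := by
        have hx1 : (E ^ (j + 1)) y = E ((E ^ j) y) := by
          rw [pow_succ' E j]; rfl
        rw [Module.End.mul_apply, ← hx1, h0, map_zero]
      have hlam : ((j : K) + 1) * ((m : K) - (j : K)) ≠ 0 := by
        refine mul_ne_zero (Nat.cast_add_one_ne_zero j) ?_
        have hj : j < m := by omega
        have : ((m - j : ℕ) : K) ≠ 0 := Nat.cast_ne_zero.mpr (by omega)
        rwa [Nat.cast_sub hj.le] at this
      exact ih (by omega) (eq_zero_of_mem_maxGen_of_apply_eq_zero _ hlam hGa hA)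
  -- define the restricted map
  have hMaps : ∀ x ∈ (LinearMap.ker F ⊓ H.maxGenEigenspace (-(m : K)) : Submodule K V),
      (E ^ m) x ∈ (LinearMap.ker E ⊓ H.maxGenEigenspace ((m : K)) : Submodule K V) := by
    intro x hx
    obtain ⟨hx1, hx2⟩ := Submodule.mem_inf.mp hx
    rw [LinearMap.mem_ker] at hx1
    have h1 := (key x hx1 hx2 m).1
    have h2 := (key x hx1 hx2 m).2
    rw [show -(m : K) + 2 * (m : K) = (m : K) by ring] at h1
    rw [show ((m : K) + 1) * ((m : K) - (m : K)) = 0 by ring] at h2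
    refine Submodule.mem_inf.mpr ⟨?_, h1⟩
    rw [LinearMap.mem_ker]
    exact ex_zero rhe rhf ref h1 h2
  set Φ := (E ^ m).restrict hMaps with hΦ
  have hinj : Function.Injective Φ := by
    intro a b hab
    have : (E ^ m) ((a : V) - (b : V)) = 0 := by
      have := congrArg (Subtype.val) hab
      simp only [LinearMap.restrict_apply, hΦ] at this
      rw [map_sub, this, sub_self]
    by_contra hne
    have hsub : ((a : V) - (b : V)) ≠ 0 := fun hc => hne (Subtype.ext (sub_eq_zero.mp hc))
    have hmem : ((a : V) - (b : V)) ∈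
        (LinearMap.ker F ⊓ H.maxGenEigenspace (-(m : K)) : Submodule K V) :=
      Submodule.sub_mem _ a.2 b.2
    obtain ⟨hm1, hm2⟩ := Submodule.mem_inf.mp hmem
    exact nz _ (LinearMap.mem_ker.mp hm1) hm2 hsub m le_rfl this
  exact LinearMap.finrank_le_finrank_of_injective hinj


lemma slice_weight [IsAlgClosed K] (rhe : H * E - E * H = E + E)
    (rhf : H * F - F * H = -(F + F)) (ref : E * F - F * E = H) {μ : K}
    (hne : LinearMap.ker F ⊓ H.maxGenEigenspace μ ≠ ⊥) : ∃ m : ℕ, μ = -(m : K) := by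
  classical
  set U : Submodule K V := LinearMap.ker F ⊓ H.maxGenEigenspace μ with hU
  have hFH : F * H = H * F + (F + F) := by
    rw [eq_add_of_sub_eq rhf]; abel
  have hInv : ∀ x ∈ U, H x ∈ U := by
    intro x hx
    obtain ⟨hx1, hx2⟩ := Submodule.mem_inf.mp hx
    rw [LinearMap.mem_ker] at hx1
    refine Submodule.mem_inf.mpr ⟨?_, ?_⟩
    · rw [LinearMap.mem_ker]
      have := congrArg (fun T : Module.End K V => T x) hFH
      simp only [Module.End.mul_apply, LinearMap.add_apply] at this
      rw [hx1, map_zero] at this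
      simpa using this
    · exact mapsTo_maxGen (rfl : H * H = H * H) μ x hx2
  haveI : Nontrivial U := Submodule.nontrivial_iff_ne_bot.mpr hne
  set H' : Module.End K U := H.restrict hInv with hH'
  obtain ⟨ν, hν⟩ := Module.End.exists_eigenvalue H'
  obtain ⟨y₀, hy₀⟩ := hν.exists_hasEigenvector
  set y : V := (y₀ : V) with hy
  have hy0 : y ≠ 0 := fun hc => hy₀.2 (Subtype.ext hc)
  have hyU : (y₀ : V) ∈ U := y₀.2
  have hyF : F y = 0 := LinearMap.mem_ker.mp (Submodule.mem_inf.mp hyU).1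
  have hyW : y ∈ H.maxGenEigenspace μ := (Submodule.mem_inf.mp hyU).2
  have hyH : H y = ν • y := by
    have := hy₀.apply_eq_smul
    have := congrArg (Subtype.val) this
    simpa [hH', LinearMap.restrict_apply, hy] using this
  have hνμ : ν = μ := by
    by_contra hnee
    have hymem : y ∈ H.maxGenEigenspace ν := by
      rw [Module.End.mem_maxGenEigenspace]
      exact ⟨1, by rw [pow_one]; simp [LinearMap.sub_apply, hyH]⟩
    have hdis := Module.End.disjoint_genEigenspace H hnee (⊤ : ℕ∞) (⊤ : ℕ∞)
    exact hy0 (hdis.le_bot ⟨hymem, hyW⟩)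
  rw [hνμ] at hyH
  -- the string of vectors
  have Hz : ∀ i : ℕ, H ((E ^ i) y) = (μ + 2 * i) • (E ^ i) y := by
    intro i
    induction i with
    | zero => simpa using hyH
    | succ i ih =>
      have hx1 : (E ^ (i + 1)) y = E ((E ^ i) y) := by rw [pow_succ' E i]; rfl
      have h := congrArg (fun T : Module.End K V => T ((E ^ i) y)) (eq_add_of_sub_eq rhe)
      simp only [Module.End.mul_apply, LinearMap.add_apply] at h
      rw [ih, map_smul] at h
      rw [hx1, h, ← two_smul K (E ((E ^ i) y)), ← add_smul]
      congr 1
      push_cast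
      ring
  have Fz : ∀ i : ℕ, F ((E ^ (i + 1)) y) = (-(((i : K) + 1) * (μ + i))) • (E ^ i) y := by
    intro i
    induction i with
    | zero =>
      have refFE : F * E = E * F - H := by rw [← ref]; abel
      have hx1 : (E ^ 1) y = E y := by rw [pow_one]
      have hx0 : (E ^ 0) y = y := by rw [pow_zero]; rfl -- keep
      have h := congrArg (fun T : Module.End K V => T y) refFE
      simp only [Module.End.mul_apply, LinearMap.sub_apply] at h
      rw [hyF, map_zero, hyH] at h
      rw [hx1, hx0, h]
      push_cast
      module
    | succ i ih =>
      have refFE : F * E = E * F - H := by rw [← ref]; abel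
      have hx1 : (E ^ (i + 2)) y = E ((E ^ (i + 1)) y) := by rw [pow_succ' E (i + 1)]; rfl
      have hx2 : E ((E ^ i) y) = (E ^ (i + 1)) y := by rw [pow_succ' E i]; rfl
      have h := congrArg (fun T : Module.End K V => T ((E ^ (i + 1)) y)) refFE
      simp only [Module.End.mul_apply, LinearMap.sub_apply] at h
      rw [ih, map_smul, Hz (i + 1), hx2] at h
      rw [hx1, h]
      push_cast
      module
  -- there is a vanishing power
  have hex : ∃ i : ℕ, (E ^ i) y = 0 := by
    by_contra hc
    push_neg at hc
    let p : ℕ → Submodule K V := fun i => H.maxGenEigenspace (μ + 2 * (i : K))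
    have hinj : Function.Injective (fun i : ℕ => μ + 2 * (i : K)) := by
      intro a b hab
      simp only at hab
      have h2 : (2 : K) ≠ 0 := two_ne_zero
      have := mul_left_cancel₀ h2 (add_left_cancel hab)
      exact_mod_cast this
    have hp : iSupIndep p := (H.independent_maxGenEigenspace).comp hinj
    haveI := hp.fintypeNeBotOfFiniteDimensional
    have hforall : ∀ i, p i ≠ ⊥ := by
      intro i
      rw [Submodule.ne_bot_iff]
      refine ⟨(E ^ i) y, ?_, hc i⟩
      rw [Module.End.mem_maxGenEigenspace]
      exact ⟨1, by rw [pow_one]; simp [LinearMap.sub_apply, Hz i]⟩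
    have : Finite ℕ := Finite.of_injective (fun i : ℕ => (⟨i, hforall i⟩ : {i // p i ≠ ⊥}))
      (fun a b hab => by simpa using congrArg Subtype.val hab)
    exact @not_finite ℕ _ this
  set s := Nat.find hex with hs
  have hzs : (E ^ s) y = 0 := Nat.find_spec hex
  have hs0 : s ≠ 0 := by
    intro hc
    rw [hc, pow_zero] at hzs
    exact hy0 (by simpa using hzs)
  obtain ⟨r, hr⟩ : ∃ r, s = r + 1 := ⟨s - 1, by omega⟩
  have hzr : (E ^ r) y ≠ 0 := Nat.find_min hex (by omega)
  have h0 : (0 : V) = (-(((r : K) + 1) * (μ + r))) • (E ^ r) y := by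
    rw [← Fz r, ← hr, hzs, map_zero]
  have hcoef : -(((r : K) + 1) * (μ + r)) = 0 := by
    rcases smul_eq_zero.mp h0.symm with hco | hco
    · exact hco
    · exact absurd hco hzr
  have : μ + r = 0 := by
    have hne1 : ((r : K) + 1) ≠ 0 := Nat.cast_add_one_ne_zero r
    have := neg_eq_zero.mp hcoef
    rcases mul_eq_zero.mp this with hq | hq
    · exact absurd hq hne1
    · exact hq
  exact ⟨r, by linear_combination this⟩


end Sl2

section Counting

variable [FiniteDimensional K V]

lemma sum_finrank_le_finrank_iSup {ι : Type*} [DecidableEq ι] (p : ι → Submodule K V)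
    (hp : iSupIndep p) (t : Finset ι) :
    ∑ i ∈ t, finrank K ↥(p i) ≤ finrank K ↥(⨆ i ∈ t, p i) := by
  classical
  induction t using Finset.induction_on with
  | empty => simp
  | insert a t ha ih =>
    rw [Finset.sum_insert ha, Finset.iSup_insert]
    have hdisj : Disjoint (p a) (⨆ i ∈ t, p i) := by
      refine (hp a).mono_right ?_
      refine iSup₂_le fun i hi => ?_
      exact le_iSup₂ (f := fun (j : ι) (_ : j ≠ a) => p j) i
        (by rintro rfl; exact ha hi)
    have hkey := Submodule.finrank_sup_add_finrank_inf_eq (p a) (⨆ i ∈ t, p i)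
    rw [hdisj.eq_bot, finrank_bot, add_zero] at hkey
    rw [hkey]
    omega

lemma finrank_biSup_le {ι : Type*} [DecidableEq ι] (p : ι → Submodule K V) (t : Finset ι) :
    finrank K ↥(⨆ i ∈ t, p i) ≤ ∑ i ∈ t, finrank K ↥(p i) := by
  classical
  induction t using Finset.induction_on with
  | empty => simp
  | insert a t ha ih =>
    rw [Finset.sum_insert ha, Finset.iSup_insert]
    have hkey := Submodule.finrank_sup_add_finrank_inf_eq (p a) (⨆ i ∈ t, p i)
    omega

end Counting

section MainAux

variable [CharZero K] [IsAlgClosed K] [FiniteDimensional K V]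
variable {H E F : Module.End K V}

/-- The key inequality, over an algebraically closed field of characteristic zero. -/
theorem finrank_ker_le (rhe : H * E - E * H = E + E) (rhf : H * F - F * H = -(F + F))
    (ref : E * F - F * E = H) :
    finrank K ↥(LinearMap.ker F) ≤ finrank K ↥(LinearMap.ker E) := by
  classical
  have hFH : F * H = H * F + (F + F) := by rw [eq_add_of_sub_eq rhf]; abel
  have hInv : ∀ x ∈ LinearMap.ker F, H x ∈ LinearMap.ker F := by
    intro x hx
    rw [LinearMap.mem_ker] at hx ⊢
    have := congrArg (fun T : Module.End K V => T x) hFH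
    simp only [Module.End.mul_apply, LinearMap.add_apply] at this
    rw [hx, map_zero] at this
    simpa using this
  have htop : ⨆ μ : K, H.genEigenspace μ ⊤ = ⊤ := Module.End.iSup_maxGenEigenspace_eq_top H
  have hdecomp : LinearMap.ker F = ⨆ μ : K, (LinearMap.ker F ⊓ H.genEigenspace μ ⊤) :=
    Submodule.eq_iSup_inf_genEigenspace ⊤ hInv htop
  set q : K → Submodule K V := fun μ => LinearMap.ker F ⊓ H.maxGenEigenspace μ with hqdef
  have hq : iSupIndep q := (H.independent_maxGenEigenspace).mono fun μ => inf_le_right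
  haveI := hq.fintypeNeBotOfFiniteDimensional
  have hfin : {μ : K | q μ ≠ ⊥}.Finite :=
    Set.finite_coe_iff.mp (by exact Finite.of_fintype {i : K // q i ≠ ⊥})
  set s : Finset K := hfin.toFinset with hsdef
  have hmem_s : ∀ μ : K, μ ∈ s ↔ q μ ≠ ⊥ := by
    intro μ; rw [hsdef, Set.Finite.mem_toFinset]; rfl
  have hsup : LinearMap.ker F = ⨆ μ ∈ s, q μ := by
    rw [hdecomp]
    apply le_antisymm
    · refine iSup_le fun μ => ?_
      by_cases hμ : q μ = ⊥
      · rw [hμ]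
        exact bot_le
      · exact le_iSup₂ (f := fun (μ : K) (_ : μ ∈ s) => q μ) μ ((hmem_s μ).mpr hμ)
    · refine iSup₂_le fun μ _ => ?_
      exact le_iSup (fun μ => LinearMap.ker F ⊓ H.genEigenspace μ ⊤) μ
  -- for each μ in the support, the weight is a nonpositive integer
  have hw : ∀ μ ∈ s, ∃ m : ℕ, μ = -(m : K) := by
    intro μ hμ
    exact slice_weight rhe rhf ref ((hmem_s μ).mp hμ)
  choose g hg using hw
  -- bound each slice
  have hslice : ∀ μ (hμ : μ ∈ s), finrank K ↥(q μ) ≤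
      finrank K ↥(LinearMap.ker E ⊓ H.maxGenEigenspace ((g μ hμ : K))) := by
    intro μ hμ
    have := slice_le rhe rhf ref (g μ hμ)
    rwa [← hg μ hμ] at this
  -- the family of target slices
  set c : ℕ → Submodule K V := fun n => LinearMap.ker E ⊓ H.maxGenEigenspace ((n : K)) with hcdef
  have hc : iSupIndep c := by
    have h1 : iSupIndep (fun n : ℕ => H.maxGenEigenspace ((n : K))) :=
      (H.independent_maxGenEigenspace).comp Nat.cast_injective
    exact h1.mono fun n => inf_le_right
  -- attach and use the image
  calc finrank K ↥(LinearMap.ker F) = finrank K ↥(⨆ μ ∈ s, q μ) := by rw [← hsup]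
    _ ≤ ∑ μ ∈ s, finrank K ↥(q μ) := finrank_biSup_le q s
    _ = ∑ μ ∈ s.attach, finrank K ↥(q μ.1) := (Finset.sum_attach s _).symm
    _ ≤ ∑ μ ∈ s.attach, finrank K ↥(c (g μ.1 μ.2)) := by
        refine Finset.sum_le_sum fun μ _ => ?_
        exact hslice μ.1 μ.2
    _ = ∑ n ∈ s.attach.image (fun μ => g μ.1 μ.2), finrank K ↥(c n) := by
        rw [Finset.sum_image]
        intro a _ b _ hab
        have : a.1 = b.1 := by rw [hg a.1 a.2, hg b.1 b.2, show g a.1 a.2 = g b.1 b.2 from hab]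
        exact Subtype.ext this
    _ ≤ finrank K ↥(⨆ n ∈ s.attach.image (fun μ => g μ.1 μ.2), c n) :=
        sum_finrank_le_finrank_iSup c hc _
    _ ≤ finrank K ↥(LinearMap.ker E) := by
        apply Submodule.finrank_mono
        exact iSup₂_le fun n _ => inf_le_left

end MainAux

section BaseChange

variable {k : Type*} [Field k] {W : Type*} [AddCommGroup W] [Module k W]
  [FiniteDimensional k W]
variable (K : Type*) [Field K] [Algebra k K]

lemma finrank_range_baseChange (φ : W →ₗ[k] W) :
    finrank K ↥(LinearMap.range (φ.baseChange K)) = finrank k ↥(LinearMap.range φ) := by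
  have e1 : φ = (LinearMap.range φ).subtype ∘ₗ φ.rangeRestrict := by
    ext x; simp
  have e2 : φ.baseChange K =
      ((LinearMap.range φ).subtype.baseChange K) ∘ₗ (φ.rangeRestrict.baseChange K) := by
    conv_lhs => rw [e1]
    rw [LinearMap.baseChange_comp]
  have hsurj : Function.Surjective (φ.rangeRestrict.baseChange K) := by
    have : Function.Surjective φ.rangeRestrict := φ.surjective_rangeRestrict
    rw [LinearMap.baseChange_eq_ltensor]
    exact LinearMap.lTensor_surjective K this
  have hinj : Function.Injective ((LinearMap.range φ).subtype.baseChange K) := by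
    rw [LinearMap.baseChange_eq_ltensor]
    exact Module.Flat.lTensor_preserves_injective_linearMap _
      (Submodule.injective_subtype _)
  have e3 : LinearMap.range (φ.baseChange K) =
      LinearMap.range ((LinearMap.range φ).subtype.baseChange K) := by
    rw [e2, LinearMap.range_comp, LinearMap.range_eq_top.mpr hsurj, Submodule.map_top]
  rw [e3, LinearMap.finrank_range_of_inj hinj]
  exact Module.finrank_baseChange

lemma finrank_ker_baseChange (φ : W →ₗ[k] W) :
    finrank K ↥(LinearMap.ker (φ.baseChange K)) = finrank k ↥(LinearMap.ker φ) := by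
  have h1 := LinearMap.finrank_range_add_finrank_ker (φ.baseChange K)
  have h2 := LinearMap.finrank_range_add_finrank_ker φ
  have h3 := finrank_range_baseChange K φ
  have h4 : finrank K (TensorProduct k K W) = finrank k W := Module.finrank_baseChange
  omega

end BaseChange

end Sl2ProofAux

open Sl2ProofAux in
/-- For an sl₂-triple `(h, e, f)` on a finite-dimensional vector space over a field of
characteristic zero, any operator `P` with `P² = P`, `e ∘ P = 0`, `P ∘ f = 0` which fixes
`ker e` pointwise is the projection onto `ker e` along `range f`; in particular it is
unique. -/
theorem sl2_extremal_projector_unique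
    (k : Type*) [Field k] [CharZero k]
    (V : Type*) [AddCommGroup V] [Module k V] [FiniteDimensional k V]
    (h e f : Module.End k V)
    (rel_he : h ∘ₗ e - e ∘ₗ h = 2 • e)
    (rel_hf : h ∘ₗ f - f ∘ₗ h = -(2 • f))
    (rel_ef : e ∘ₗ f - f ∘ₗ e = h)
    (P : Module.End k V)
    (hPP : P ∘ₗ P = P)
    (heP : e ∘ₗ P = 0)
    (hPf : P ∘ₗ f = 0)
    (hfix : ∀ v ∈ LinearMap.ker e, P v = v) :
    ∃ hc : IsCompl (LinearMap.ker e) (LinearMap.range f),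
      P = (LinearMap.ker e).subtype ∘ₗ
        (LinearMap.ker e).linearProjOfIsCompl (LinearMap.range f) hc := by
  classical
  -- relations in multiplicative form
  have rhe : h * e - e * h = e + e := by
    rw [Module.End.mul_eq_comp, Module.End.mul_eq_comp, rel_he, two_smul]
  have rhf : h * f - f * h = -(f + f) := by
    rw [Module.End.mul_eq_comp, Module.End.mul_eq_comp, rel_hf, two_smul]
  have ref : e * f - f * e = h := by
    rw [Module.End.mul_eq_comp, Module.End.mul_eq_comp, rel_ef]
  -- base change to the algebraic closure
  set K := AlgebraicClosure k with hK
  haveI : CharZero K := charZero_of_injective_algebraMap (algebraMap k K).injective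
  set Φ : Module.End k V →ₐ[k] Module.End K (TensorProduct k K V) :=
    Module.End.baseChangeHom k K V with hΦ
  have hE := congrArg Φ rhe
  rw [map_sub Φ, map_mul Φ, map_mul Φ, map_add Φ] at hE
  have hF := congrArg Φ rhf
  rw [map_sub Φ, map_mul Φ, map_mul Φ, map_neg Φ, map_add Φ] at hF
  have hH := congrArg Φ ref
  rw [map_sub Φ, map_mul Φ, map_mul Φ] at hH
  have hbase := finrank_ker_le hE hF hH
  have k1 : finrank K ↥(LinearMap.ker (Φ f)) = finrank k ↥(LinearMap.ker f) :=
    finrank_ker_baseChange K f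
  have k2 : finrank K ↥(LinearMap.ker (Φ e)) = finrank k ↥(LinearMap.ker e) :=
    finrank_ker_baseChange K e
  have hineq : finrank k ↥(LinearMap.ker f) ≤ finrank k ↥(LinearMap.ker e) := by
    rw [← k1, ← k2]; exact hbase
  -- disjointness from P
  have hPf0 : ∀ w : V, P (f w) = 0 := by
    intro w
    have := congrArg (fun T : Module.End k V => T w) hPf
    simpa using this
  have hdisj : Disjoint (LinearMap.ker e) (LinearMap.range f) := by
    rw [Submodule.disjoint_def]
    intro v hv1 hv2
    obtain ⟨w, rfl⟩ := hv2
    have h1 : P (f w) = f w := hfix _ hv1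
    rw [hPf0 w] at h1
    exact h1.symm
  -- codisjointness by dimension count
  have hcod : LinearMap.ker e ⊔ LinearMap.range f = ⊤ := by
    apply Submodule.eq_top_of_finrank_eq
    have hsum := Submodule.finrank_sup_add_finrank_inf_eq (LinearMap.ker e) (LinearMap.range f)
    rw [hdisj.eq_bot, finrank_bot, add_zero] at hsum
    have hrn := LinearMap.finrank_range_add_finrank_ker f
    have hrne := LinearMap.finrank_range_add_finrank_ker e
    have hle : finrank k ↥(LinearMap.ker e ⊔ LinearMap.range f) ≤ finrank k V :=
      Submodule.finrank_le _
    omega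
  have hcompl : IsCompl (LinearMap.ker e) (LinearMap.range f) :=
    ⟨hdisj, codisjoint_iff.mpr hcod⟩
  refine ⟨hcompl, ?_⟩
  ext v
  have hv : v ∈ LinearMap.ker e ⊔ LinearMap.range f := by rw [hcod]; trivial
  obtain ⟨x, hx, y, hy, rfl⟩ := Submodule.mem_sup.mp hv
  obtain ⟨w, rfl⟩ := hy
  have hPval : P (x + f w) = x := by
    rw [map_add, hfix x hx, hPf0 w, add_zero]
  have l1 : (LinearMap.ker e).linearProjOfIsCompl (LinearMap.range f) hcompl x
      = ⟨x, hx⟩ := by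
    conv_lhs => rw [show x = ((⟨x, hx⟩ : LinearMap.ker e) : V) from rfl]
    exact Submodule.linearProjOfIsCompl_apply_left hcompl ⟨x, hx⟩
  have l2 : (LinearMap.ker e).linearProjOfIsCompl (LinearMap.range f) hcompl (f w) = 0 :=
    Submodule.linearProjOfIsCompl_apply_right' hcompl (x := f w) ⟨w, rfl⟩
  have hProjval : ((LinearMap.ker e).subtype ∘ₗ
      (LinearMap.ker e).linearProjOfIsCompl (LinearMap.range f) hcompl) (x + f w) = x := by
    rw [LinearMap.comp_apply, map_add, l1, l2, add_zero]
    rfl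
  rw [hPval, hProjval]
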